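/- arXiv:1709.06432 — 2 statements merged into one kernel-verified Lean document; each statement's English description precedes it below -/
import Mathlib

section
/- Let p be prime, b_1(X), ..., b_t(X) monic pairwise coprime nonconstant polynomials over F_p with degrees e_1, ..., e_t, (y_n) the Halton sequence in these bases and (x_n) the digital Kronecker sequence for some L ∈ F_p((X^{-1})). For an interval J = [0, γ) × Π_{j=1}^t [c_j / p^{e_j l_j}, δ_j) with δ_j ≤ (c_j+1)/p^{e_j l_j} and Σ_j e_j l_j > (log_p N)/2, the counting function and the measure satisfy max(A_N(J), N·λ(J)) ≤ √N + 1, where A_N(J) = #{n < N : (x_n, y_n) ∈ J}. -/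
open scoped Classical ENNReal
open Polynomial

noncomputable section

namespace KH

/-- The field `F_p((X⁻¹))` of formal Laurent series in `X⁻¹` over `ZMod p`,
modeled as Hahn series over `ℤ`: the coefficient at `i : ℤ` is the coefficient of `X^{-i}`. -/
abbrev LS (p : ℕ) := HahnSeries ℤ (ZMod p)

/-- The element `X` of `F_p((X⁻¹))` (exponent `-1` in `X⁻¹`). -/
def Xls (p : ℕ) : LS p := HahnSeries.single (-1 : ℤ) 1

/-- `ν(L) = -w` where `w` is the order of `L` (`ν(0) = 0` by convention). -/
def nu {p : ℕ} (L : LS p) : ℤ := -(HahnSeries.order L)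

/-- Embedding of polynomials `F_p[X] → F_p((X⁻¹))`, sending `X` to `Xls`. -/
def P2L (p : ℕ) [Fact p.Prime] : Polynomial (ZMod p) →+* LS p :=
  (Polynomial.aeval (Xls p)).toRingHom

/-- The fractional part `{L} = ∑_{i ≥ 1} a_i X^{-i}`. -/
def frac {p : ℕ} (L : LS p) : LS p where
  coeff i := if 1 ≤ i then L.coeff i else 0
  isPWO_support' := L.isPWO_support'.mono (by
    intro i hi
    by_cases h : (1:ℤ) ≤ i <;> simp [HahnSeries.support, h] at hi ⊢ <;> tauto)

/-- Continued fraction remainders: `cfRem L 0 = L`, `cfRem L (n+1) = 1/{cfRem L n}`. -/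
def cfRem {p : ℕ} [Fact p.Prime] (L : LS p) : ℕ → LS p
  | 0 => L
  | n + 1 => (frac (cfRem L n))⁻¹

/-- The `n`-th continued fraction partial quotient of `L` (as a Laurent series; it is the
polynomial part of the `n`-th remainder). -/
def cfA {p : ℕ} [Fact p.Prime] (L : LS p) (n : ℕ) : LS p :=
  cfRem L n - frac (cfRem L n)

/-- The degree of the `n`-th partial quotient. -/
def degA {p : ℕ} [Fact p.Prime] (L : LS p) (n : ℕ) : ℤ := nu (cfA L n)

/-- Denominators `Q_h` of the convergents of `L`. -/
def cfQ {p : ℕ} [Fact p.Prime] (L : LS p) : ℕ → LS p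
  | 0 => 1
  | 1 => cfA L 1
  | n + 2 => cfA L (n + 2) * cfQ L (n + 1) + cfQ L n

/-- Numerators `P_h` of the convergents of `L`. -/
def cfP {p : ℕ} [Fact p.Prime] (L : LS p) : ℕ → LS p
  | 0 => cfA L 0
  | 1 => cfA L 1 * cfA L 0 + 1
  | n + 2 => cfA L (n + 2) * cfP L (n + 1) + cfP L n

/-- `d_h = deg Q_h`. -/
def dQ {p : ℕ} [Fact p.Prime] (L : LS p) (h : ℕ) : ℤ := nu (cfQ L h)

/-- Evaluation at `X = p` of (the fractional part of) a Laurent series: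
`∑_{i ≥ 1} a_i p^{-i}` with digits `a_i ∈ {0, …, p-1}`. -/
def evalAtP {p : ℕ} (L : LS p) : ℝ :=
  ∑' i : ℕ, ((L.coeff ((i : ℤ) + 1)).val : ℝ) / (p : ℝ) ^ (i + 1)

/-- The polynomial over `F_p` associated with `n ∈ ℕ`, whose coefficients are the
base-`p` digits of `n`. -/
def nPoly (p : ℕ) (n : ℕ) : Polynomial (ZMod p) :=
  ∑ i ∈ Finset.range (n + 1), Polynomial.C ((n / p ^ i % p : ℕ) : ZMod p) * Polynomial.X ^ i

/-- The `n`-th point of the digital Kronecker sequence associated with `L`. -/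
def kron (p : ℕ) [Fact p.Prime] (L : LS p) (n : ℕ) : ℝ :=
  evalAtP (frac (P2L p (nPoly p n) * L))

/-- The `i`-th digit of `n(X)` in base `b(X)`. -/
def haltonDigit (p : ℕ) [Fact p.Prime] (b : Polynomial (ZMod p)) (n i : ℕ) :
    Polynomial (ZMod p) :=
  (nPoly p n /ₘ b ^ i) %ₘ b

/-- Evaluation of a polynomial over `F_p` at `p` (digits in `{0,…,p-1}`). -/
def polyEvalNat (p : ℕ) (a : Polynomial (ZMod p)) : ℕ :=
  ∑ i ∈ Finset.range (a.natDegree + 1), (a.coeff i).val * p ^ i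

/-- The `n`-th point of the van der Corput sequence in base `b(X)` over `F_p`. -/
def vdc (p : ℕ) [Fact p.Prime] (b : Polynomial (ZMod p)) (n : ℕ) : ℝ :=
  ∑' i : ℕ, (polyEvalNat p (haltonDigit p b n i) : ℝ) / (p : ℝ) ^ (b.natDegree * (i + 1))

/-- Number of indices `n < N` with `z n` in the box `∏ [a i, b i)`. -/
def countIn (d : ℕ) (z : ℕ → Fin d → ℝ) (N : ℕ) (a b : Fin d → ℝ) : ℕ :=
  ((Finset.range N).filter fun n => ∀ i, a i ≤ z n i ∧ z n i < b i).card

/-- The (extreme) discrepancy of the first `N` points of `z` in `[0,1)^d`. -/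
def disc (d : ℕ) (z : ℕ → Fin d → ℝ) (N : ℕ) : ℝ :=
  sSup { r | ∃ a b : Fin d → ℝ, (∀ i, 0 ≤ a i ∧ a i ≤ b i ∧ b i ≤ 1) ∧
    r = |(countIn d z N a b : ℝ) / N - ∏ i, (b i - a i)| }

/-- The star discrepancy of the first `N` points of `z` in `[0,1)^d`. -/
def starDisc (d : ℕ) (z : ℕ → Fin d → ℝ) (N : ℕ) : ℝ :=
  sSup { r | ∃ b : Fin d → ℝ, (∀ i, 0 < b i ∧ b i ≤ 1) ∧
    r = |(countIn d z N (fun _ => 0) b : ℝ) / N - ∏ i, b i| }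

/-- The Laurent series `∑_{i ≥ 1} a_{i-1} X^{-i}` associated with a coefficient
sequence `a : ℕ → ZMod p`; this identifies `H = {L : ν(L) < 0}` with `ℕ → ZMod p`. -/
def toLS (p : ℕ) (a : ℕ → ZMod p) : LS p where
  coeff i := if h : 1 ≤ i then a (i - 1).toNat else 0
  isPWO_support' := by
    have : BddBelow {i : ℤ | (if h : 1 ≤ i then a (i - 1).toNat else 0) ≠ 0} := by
      refine ⟨1, fun i hi => ?_⟩
      by_cases h : (1:ℤ) ≤ i
      · exact h
      · simp [h] at hi
    exact (Set.isPWO_iff_isWF.mpr this.wellFoundedOn_lt)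

instance : MeasurableSpace (ZMod p) := ⊤

/-- A `(t, m, s)`-net in base `p`. -/
def IsNet (p t m s : ℕ) (P : Fin (p ^ m) → Fin s → ℝ) : Prop :=
  t ≤ m ∧ ∀ (d a : Fin s → ℕ), (∑ i, d i) = m - t → (∀ i, a i < p ^ d i) →
    (Finset.univ.filter fun n => ∀ i,
      (a i : ℝ) / (p : ℝ) ^ d i ≤ P n i ∧ P n i < ((a i : ℝ) + 1) / (p : ℝ) ^ d i).card = p ^ t

/-- A `(t, s)`-sequence in base `p`. -/
def IsTSeq (p t s : ℕ) (z : ℕ → Fin s → ℝ) : Prop :=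
  ∀ m k : ℕ, t < m → IsNet p t m s fun n => z (k * p ^ m + (n : ℕ))



section AuxNat

lemma digit_sum_lt {m : ℕ} (K : ℕ) (d : ℕ → ℕ) (hd : ∀ i, d i < m) :
    ∑ i ∈ Finset.range K, d i * m ^ i < m ^ K := by
  have hm : 1 ≤ m := lt_of_le_of_lt (Nat.zero_le _) (hd 0)
  induction K with
  | zero => simpa using hm
  | succ K ih =>
      rw [Finset.sum_range_succ, pow_succ]
      have h1 : d K * m ^ K ≤ (m - 1) * m ^ K :=
        Nat.mul_le_mul_right _ (Nat.le_sub_one_of_lt (hd K))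
      have h2 : (m - 1) * m ^ K + m ^ K = m ^ K * m := by
        cases m with
        | zero => omega
        | succ m => simp [Nat.succ_sub_one]; ring
      omega

lemma digit_sum_shift {m : ℕ} (K : ℕ) (d : ℕ → ℕ) :
    ∑ i ∈ Finset.range (K + 1), d i * m ^ i
      = d 0 + m * ∑ i ∈ Finset.range K, d (i + 1) * m ^ i := by
  rw [Finset.sum_range_succ' (fun i => d i * m ^ i), Finset.mul_sum]
  simp only [pow_zero, mul_one]
  rw [add_comm]
  congr 1
  apply Finset.sum_congr rfl
  intro i _
  rw [pow_succ]
  ring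

lemma digit_extract {m : ℕ} (d : ℕ → ℕ) (hd : ∀ i, d i < m) (j : ℕ) :
    ∀ K, (∑ i ∈ Finset.range K, d i * m ^ i) / m ^ j % m = if j < K then d j else 0 := by
  induction j generalizing d with
  | zero =>
      intro K
      cases K with
      | zero => simp
      | succ K =>
          rw [digit_sum_shift, pow_zero, Nat.div_one, Nat.add_mul_mod_self_left,
            Nat.mod_eq_of_lt (hd 0)]
          simp
  | succ j ih =>
      intro K
      cases K with
      | zero => simp
      | succ K =>
          rw [digit_sum_shift, pow_succ', ← Nat.div_div_eq_div_mul,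
            Nat.add_mul_div_left _ _ (lt_of_le_of_lt (Nat.zero_le _) (hd 0)),
            Nat.div_eq_of_lt (hd 0), zero_add,
            ih (fun i => d (i + 1)) (fun i => hd (i + 1)) K]
          simp [Nat.succ_lt_succ_iff]

lemma digit_sum_recover {m : ℕ} (hm : 2 ≤ m) :
    ∀ (K n : ℕ), n < m ^ K → n = ∑ i ∈ Finset.range K, (n / m ^ i % m) * m ^ i := by
  intro K
  induction K with
  | zero => intro n hn; simp at hn; simp [hn]
  | succ K ih =>
      intro n hn
      rw [Finset.sum_range_succ' (fun i => (n / m ^ i % m) * m ^ i)]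
      simp only [pow_zero, Nat.div_one, one_mul]
      have h2 : ∑ i ∈ Finset.range K, (n / m ^ (i + 1) % m) * m ^ (i + 1)
          = m * ∑ i ∈ Finset.range K, ((n / m) / m ^ i % m) * m ^ i := by
        rw [Finset.mul_sum]
        apply Finset.sum_congr rfl
        intro i _
        rw [pow_succ', Nat.div_div_eq_div_mul]
        ring
      rw [h2, ← ih (n / m) (Nat.div_lt_of_lt_mul (by rw [← pow_succ'] ; exact hn))]
      have := Nat.div_add_mod n m
      omega

lemma reflect_sum {m l : ℕ} (v : ℕ → ℕ) :
    ∑ i ∈ Finset.range l, v i * m ^ (l - 1 - i)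
      = ∑ j ∈ Finset.range l, v (l - 1 - j) * m ^ j := by
  rw [← Finset.sum_range_reflect (fun j => v (l - 1 - j) * m ^ j) l]
  apply Finset.sum_congr rfl
  intro i hi
  simp only [Finset.mem_range] at hi
  have : l - 1 - (l - 1 - i) = i := by omega
  rw [this]

lemma rev_digits_eq {m l : ℕ} {v w : ℕ → ℕ} (hv : ∀ i, v i < m) (hw : ∀ i, w i < m)
    (h : ∑ i ∈ Finset.range l, v i * m ^ (l - 1 - i)
       = ∑ i ∈ Finset.range l, w i * m ^ (l - 1 - i)) :
    ∀ i < l, v i = w i := by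
  intro i hi
  have key : ∑ j ∈ Finset.range l, v (l - 1 - j) * m ^ j
      = ∑ j ∈ Finset.range l, w (l - 1 - j) * m ^ j := by
    rw [← reflect_sum, ← reflect_sum, h]
  have h1 := digit_extract (fun j => v (l - 1 - j)) (fun j => hv _) (l - 1 - i) l
  have h2 := digit_extract (fun j => w (l - 1 - j)) (fun j => hw _) (l - 1 - i) l
  rw [key, h2] at h1
  have hlt : l - 1 - i < l := by omega
  rw [if_pos hlt, if_pos hlt] at h1
  have hii : l - 1 - (l - 1 - i) = i := by omega
  rw [hii] at h1
  exact h1.symm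

lemma tail_le {m : ℕ} (hm : 2 ≤ m) (v : ℕ → ℕ) (hv : ∀ i, v i < m) (l : ℕ) :
    ∀ K, l ≤ K → ∑ i ∈ Finset.Ico l K, (v i : ℝ) / (m : ℝ) ^ (i + 1)
      ≤ 1 / (m : ℝ) ^ l - 1 / (m : ℝ) ^ K := by
  have hm0 : (0 : ℝ) < m := by positivity
  intro K hK
  induction K, hK using Nat.le_induction with
  | base => simp
  | succ K hK ih =>
      rw [Finset.sum_Ico_succ_top hK]
      have hvK : (v K : ℝ) ≤ (m : ℝ) - 1 := by
        have : (v K : ℝ) + 1 ≤ (m : ℝ) := by exact_mod_cast Nat.succ_le_of_lt (hv K)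
        linarith
      have e1 : (v K : ℝ) / (m : ℝ) ^ (K + 1)
          ≤ ((m : ℝ) - 1) / (m : ℝ) ^ (K + 1) := by gcongr
      have e2 : ((m : ℝ) - 1) / (m : ℝ) ^ (K + 1) = 1 / (m : ℝ) ^ K - 1 / (m : ℝ) ^ (K + 1) := by
        field_simp
        ring
      linarith

end AuxNat

section AuxPoly

variable {F : Type*} [Field F]

lemma divByMonic_pow_succ {b : F[X]} (hb : b.Monic) (f : F[X]) (i : ℕ) :
    f /ₘ b ^ (i + 1) = (f /ₘ b) /ₘ b ^ i := by
  have hbne : b ≠ 0 := hb.ne_zero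
  refine (Polynomial.div_modByMonic_unique ((f /ₘ b) /ₘ b ^ i)
    (b * ((f /ₘ b) %ₘ b ^ i) + f %ₘ b) (hb.pow (i + 1)) ⟨?_, ?_⟩).1
  · have h1 := Polynomial.modByMonic_add_div f b
    have h2 := Polynomial.modByMonic_add_div (f /ₘ b) (b ^ i)
    linear_combination h1 + b * h2
  · have hdb : b.degree ≠ ⊥ := by
      rw [Polynomial.degree_eq_natDegree hbne]; exact WithBot.coe_ne_bot
    have hble : b.degree ≤ (b ^ (i + 1)).degree := by
      rw [pow_succ', Polynomial.degree_mul]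
      exact le_add_of_nonneg_right (by
        rw [Polynomial.degree_eq_natDegree (hb.pow i).ne_zero]
        exact_mod_cast Nat.zero_le _)
    refine lt_of_le_of_lt (Polynomial.degree_add_le _ _) (max_lt ?_ ?_)
    · by_cases hR : (f /ₘ b) %ₘ b ^ i = 0
      · rw [hR, mul_zero, Polynomial.degree_zero]
        exact Ne.bot_lt (by
          rw [Polynomial.degree_eq_natDegree (hb.pow (i+1)).ne_zero]
          exact WithBot.coe_ne_bot)
      · rw [pow_succ', Polynomial.degree_mul, Polynomial.degree_mul]
        exact WithBot.add_lt_add_left hdb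
          (Polynomial.degree_modByMonic_lt _ (hb.pow i))
    · exact lt_of_lt_of_le (Polynomial.degree_modByMonic_lt _ hb) hble

lemma digits_dvd {b : F[X]} (hb : b.Monic) :
    ∀ (l : ℕ) (f g : F[X]), (∀ i < l, (f /ₘ b ^ i) %ₘ b = (g /ₘ b ^ i) %ₘ b) →
      b ^ l ∣ f - g := by
  intro l
  induction l with
  | zero => intro f g _; simpa using one_dvd _
  | succ l ih =>
      intro f g h
      have h0 : f %ₘ b = g %ₘ b := by simpa using h 0 (by omega)
      obtain ⟨q, hq⟩ := ih (f /ₘ b) (g /ₘ b) (fun i hi => by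
        rw [← divByMonic_pow_succ hb, ← divByMonic_pow_succ hb]
        exact h (i + 1) (by omega))
      refine ⟨q, ?_⟩
      have e1 := Polynomial.modByMonic_add_div f b
      have e2 := Polynomial.modByMonic_add_div g b
      calc f - g = (f %ₘ b + b * (f /ₘ b)) - (g %ₘ b + b * (g /ₘ b)) := by rw [e1, e2]
        _ = b * ((f /ₘ b) - (g /ₘ b)) := by rw [h0]; ring
        _ = b ^ (l + 1) * q := by rw [hq, pow_succ]; ring

end AuxPoly

section AuxP

variable {p : ℕ} [Fact p.Prime]

lemma two_le_p : 2 ≤ p := (Fact.out : p.Prime).two_le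

lemma nPoly_coeff (n j : ℕ) :
    (nPoly p n).coeff j = ((n / p ^ j % p : ℕ) : ZMod p) := by
  have hp : 2 ≤ p := two_le_p
  rw [nPoly, Polynomial.finset_sum_coeff]
  simp only [Polynomial.coeff_C_mul_X_pow]
  rw [Finset.sum_ite_eq (Finset.range (n + 1)) j]
  by_cases h : j ∈ Finset.range (n + 1)
  · simp [h]
  · simp only [h, if_false]
    have hn : n < p ^ j := by
      have h1 : n < 2 ^ j := lt_of_lt_of_le (Nat.lt_two_pow_self (n := n))
        (Nat.pow_le_pow_right (by norm_num) (by simp at h; omega))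
      exact lt_of_lt_of_le h1 (Nat.pow_le_pow_left hp j)
    rw [Nat.div_eq_of_lt hn]
    simp

lemma nPoly_inj {n n' : ℕ} (h : nPoly p n = nPoly p n') : n = n' := by
  have hp : 2 ≤ p := two_le_p (p := p)
  have hpp : 0 < p := by omega
  have hd : ∀ j, n / p ^ j % p = n' / p ^ j % p := by
    intro j
    have h2 := congrArg (fun q => (Polynomial.coeff q j).val) h
    simp only [nPoly_coeff] at h2
    rwa [ZMod.val_natCast_of_lt (Nat.mod_lt _ hpp),
      ZMod.val_natCast_of_lt (Nat.mod_lt _ hpp)] at h2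
  set K := n + n' + 1 with hK
  have hb : ∀ m : ℕ, m ≤ n + n' → m < p ^ K := by
    intro m hm
    calc m < 2 ^ K := lt_of_le_of_lt (le_trans hm (by omega)) (Nat.lt_two_pow_self (n := K))
    _ ≤ p ^ K := Nat.pow_le_pow_left hp K
  have e1 := digit_sum_recover hp K n (hb n (by omega))
  have e2 := digit_sum_recover hp K n' (hb n' (by omega))
  rw [e1, e2]
  exact Finset.sum_congr rfl fun i _ => by rw [hd i]

lemma polyEvalNat_zero : polyEvalNat p 0 = 0 := by
  simp [polyEvalNat]

lemma polyEvalNat_lt (a : Polynomial (ZMod p)) :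
    polyEvalNat p a < p ^ (a.natDegree + 1) :=
  digit_sum_lt _ _ fun _ => ZMod.val_lt _

lemma polyEvalNat_digit (a : Polynomial (ZMod p)) (j : ℕ) :
    polyEvalNat p a / p ^ j % p = (a.coeff j).val := by
  rw [polyEvalNat, digit_extract _ (fun i => ZMod.val_lt _) j]
  by_cases h : j < a.natDegree + 1
  · rw [if_pos h]
  · rw [if_neg h, Polynomial.coeff_eq_zero_of_natDegree_lt (by omega), ZMod.val_zero]

lemma polyEvalNat_inj {a a' : Polynomial (ZMod p)}
    (h : polyEvalNat p a = polyEvalNat p a') : a = a' := by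
  ext j
  apply ZMod.val_injective
  rw [← polyEvalNat_digit, ← polyEvalNat_digit, h]

lemma haltonDigit_lt (b : Polynomial (ZMod p)) (hb : b.Monic) (he : 1 ≤ b.natDegree)
    (n i : ℕ) : polyEvalNat p (haltonDigit p b n i) < p ^ b.natDegree := by
  have h := polyEvalNat_lt (haltonDigit p b n i)
  have hp : 2 ≤ p := two_le_p
  refine lt_of_lt_of_le h (Nat.pow_le_pow_right (by omega) ?_)
  by_cases h0 : haltonDigit p b n i = 0
  · rw [h0]
    simpa using he
  · have h1 : (haltonDigit p b n i).degree < b.degree := by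
      unfold haltonDigit at h0 ⊢
      exact Polynomial.degree_modByMonic_lt _ hb
    have := Polynomial.natDegree_lt_natDegree h0 h1
    omega

lemma haltonDigit_eq_zero (b : Polynomial (ZMod p)) (hb : b.Monic) (he : 1 ≤ b.natDegree)
    (n i : ℕ) (hi : (nPoly p n).natDegree < i) : haltonDigit p b n i = 0 := by
  unfold haltonDigit
  rw [(Polynomial.divByMonic_eq_zero_iff (hb.pow i)).2, Polynomial.zero_modByMonic]
  calc (nPoly p n).degree ≤ ((nPoly p n).natDegree : WithBot ℕ) :=
        Polynomial.degree_le_natDegree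
    _ < ((i * b.natDegree : ℕ) : WithBot ℕ) := by
        have : (nPoly p n).natDegree < i * b.natDegree :=
          lt_of_lt_of_le hi (by calc i = i * 1 := (mul_one i).symm
            _ ≤ i * b.natDegree := Nat.mul_le_mul_left i he)
        exact_mod_cast this
    _ = (b ^ i).degree := by
        rw [Polynomial.degree_eq_natDegree (hb.pow i).ne_zero, hb.natDegree_pow]

lemma vdc_eq_sum (b : Polynomial (ZMod p)) (hb : b.Monic) (he : 1 ≤ b.natDegree)
    (n K : ℕ) (hK : (nPoly p n).natDegree < K) :
    vdc p b n = ∑ i ∈ Finset.range K,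
      (polyEvalNat p (haltonDigit p b n i) : ℝ) / (p : ℝ) ^ (b.natDegree * (i + 1)) := by
  apply tsum_eq_sum
  intro i hi
  simp only [Finset.mem_range, not_lt] at hi
  rw [haltonDigit_eq_zero b hb he n i (lt_of_lt_of_le hK hi), polyEvalNat_zero]
  simp

lemma vdc_repr (b : Polynomial (ZMod p)) (hb : b.Monic) (he : 1 ≤ b.natDegree) (n l : ℕ) :
    ((∑ i ∈ Finset.range l, polyEvalNat p (haltonDigit p b n i)
        * (p ^ b.natDegree) ^ (l - 1 - i) : ℕ) : ℝ) / (p : ℝ) ^ (b.natDegree * l) ≤ vdc p b n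
    ∧ vdc p b n < ((∑ i ∈ Finset.range l, polyEvalNat p (haltonDigit p b n i)
        * (p ^ b.natDegree) ^ (l - 1 - i) : ℕ) + 1 : ℝ) / (p : ℝ) ^ (b.natDegree * l) := by
  have hp2 : 2 ≤ p := two_le_p
  set e := b.natDegree with hee
  set m := p ^ e with hm
  have hm2 : 2 ≤ m := le_trans hp2 (Nat.le_self_pow (by omega) p)
  have hmR : (0 : ℝ) < (m : ℝ) := by positivity
  set K := max l ((nPoly p n).natDegree + 1) with hK
  set v : ℕ → ℕ := fun i => polyEvalNat p (haltonDigit p b n i) with hv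
  have hvlt : ∀ i, v i < m := fun i => haltonDigit_lt b hb he n i
  have hsum : vdc p b n = ∑ i ∈ Finset.range K, (v i : ℝ) / (m : ℝ) ^ (i + 1) := by
    rw [vdc_eq_sum b hb he n K (lt_of_lt_of_le (Nat.lt_succ_self _) (le_max_right _ _))]
    apply Finset.sum_congr rfl
    intro i _
    congr 1
    rw [hm]
    push_cast
    rw [← pow_mul]
  have hsplit : ∑ i ∈ Finset.range l, (v i : ℝ) / (m : ℝ) ^ (i + 1)
      + ∑ i ∈ Finset.Ico l K, (v i : ℝ) / (m : ℝ) ^ (i + 1)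
      = ∑ i ∈ Finset.range K, (v i : ℝ) / (m : ℝ) ^ (i + 1) :=
    Finset.sum_range_add_sum_Ico _ (le_max_left _ _)
  set A := ∑ i ∈ Finset.range l, v i * m ^ (l - 1 - i) with hA
  have hhead : ∑ i ∈ Finset.range l, (v i : ℝ) / (m : ℝ) ^ (i + 1) = (A : ℝ) / (m : ℝ) ^ l := by
    rw [hA]
    push_cast
    rw [Finset.sum_div]
    apply Finset.sum_congr rfl
    intro i hi
    simp only [Finset.mem_range] at hi
    rw [div_eq_div_iff (by positivity) (by positivity), mul_assoc, ← pow_add]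
    congr 2
    omega
  have htail0 : 0 ≤ ∑ i ∈ Finset.Ico l K, (v i : ℝ) / (m : ℝ) ^ (i + 1) :=
    Finset.sum_nonneg fun i _ => by positivity
  have htail1 := tail_le hm2 v hvlt l K (le_max_left _ _)
  have hKpos : (0 : ℝ) < 1 / (m : ℝ) ^ K := by positivity
  have hplm : (p : ℝ) ^ (e * l) = (m : ℝ) ^ l := by rw [hm]; push_cast; rw [pow_mul]
  constructor
  · rw [hplm, hsum, ← hsplit, hhead]
    linarith
  · rw [hplm, hsum, ← hsplit, hhead]
    have hq : (A : ℝ) / (m : ℝ) ^ l + 1 / (m : ℝ) ^ l = ((A : ℝ) + 1) / (m : ℝ) ^ l :=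
      (add_div (A : ℝ) 1 ((m : ℝ) ^ l)).symm
    linarith

end AuxP

/-- For an interval `J = [0,γ) × ∏_j [c_j/p^{e_j l_j}, δ_j)` with
`δ_j ≤ (c_j+1)/p^{e_j l_j}` and `∑_j e_j l_j > log_p(N)/2` (i.e. `N < p^{2∑ e_j l_j}`),
the hybrid Kronecker–Halton sequence satisfies `max(A_N(J), N·λ(J)) ≤ √N + 1`. -/
theorem statement15 (p : ℕ) [Fact p.Prime] (t : ℕ)
    (b : Fin t → Polynomial (ZMod p))
    (hmonic : ∀ j, (b j).Monic) (hnc : ∀ j, 1 ≤ (b j).natDegree)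
    (hcop : ∀ j j', j ≠ j' → IsCoprime (b j) (b j'))
    (L : LS p) (N : ℕ) (hN : 1 ≤ N)
    (γ : ℝ) (hγ0 : 0 < γ) (hγ1 : γ ≤ 1)
    (l : Fin t → ℕ) (c : Fin t → ℕ)
    (hc : ∀ j, c j < p ^ ((b j).natDegree * l j))
    (δ : Fin t → ℝ)
    (hδlo : ∀ j, (c j : ℝ) / (p : ℝ) ^ ((b j).natDegree * l j) ≤ δ j)
    (hδhi : ∀ j, δ j ≤ ((c j : ℝ) + 1) / (p : ℝ) ^ ((b j).natDegree * l j))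
    (hbig : (N : ℝ) < (p : ℝ) ^ (2 * ∑ j, (b j).natDegree * l j)) :
    (((Finset.range N).filter fun n =>
        (0 ≤ kron p L n ∧ kron p L n < γ) ∧
        ∀ j, (c j : ℝ) / (p : ℝ) ^ ((b j).natDegree * l j) ≤ vdc p (b j) n ∧
          vdc p (b j) n < δ j).card : ℝ) ≤ Real.sqrt N + 1 ∧
    (N : ℝ) * (γ * ∏ j, (δ j - (c j : ℝ) / (p : ℝ) ^ ((b j).natDegree * l j)))
      ≤ Real.sqrt N + 1 := by
  classical
  have hp2 : 2 ≤ p := two_le_p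
  set D := ∑ j, (b j).natDegree * l j with hD
  have hpD : (0 : ℝ) < (p : ℝ) ^ D := by positivity
  have hsqrtD : Real.sqrt N < (p : ℝ) ^ D := by
    have h1 : (N : ℝ) < ((p : ℝ) ^ D) ^ 2 := by
      rw [← pow_mul, mul_comm D 2]
      exact hbig
    have h2 : Real.sqrt N < Real.sqrt (((p : ℝ) ^ D) ^ 2) :=
      Real.sqrt_lt_sqrt (by positivity) h1
    rwa [Real.sqrt_sq (le_of_lt hpD)] at h2
  have hs0 : 0 < Real.sqrt N := Real.sqrt_pos.2 (by exact_mod_cast hN)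
  have hND : (N : ℝ) / (p : ℝ) ^ D ≤ Real.sqrt N := by
    rw [div_le_iff₀ hpD]
    calc (N : ℝ) = Real.sqrt N * Real.sqrt N := (Real.mul_self_sqrt (by positivity)).symm
      _ ≤ Real.sqrt N * (p : ℝ) ^ D := by nlinarith
  constructor
  · -- counting part
    set S := (Finset.range N).filter (fun n =>
        (0 ≤ kron p L n ∧ kron p L n < γ) ∧
        ∀ j, (c j : ℝ) / (p : ℝ) ^ ((b j).natDegree * l j) ≤ vdc p (b j) n ∧
          vdc p (b j) n < δ j) with hS
    have hAc : ∀ n ∈ S, ∀ j, (∑ i ∈ Finset.range (l j),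
        polyEvalNat p (haltonDigit p (b j) n i)
          * (p ^ (b j).natDegree) ^ (l j - 1 - i)) = c j := by
      intro n hn j
      rw [hS, Finset.mem_filter] at hn
      obtain ⟨-, -, hvdc⟩ := hn
      obtain ⟨hlo, hhi⟩ := hvdc j
      obtain ⟨hr1, hr2⟩ := vdc_repr (b j) (hmonic j) (hnc j) n (l j)
      set A := ∑ i ∈ Finset.range (l j), polyEvalNat p (haltonDigit p (b j) n i)
          * (p ^ (b j).natDegree) ^ (l j - 1 - i) with hA
      have hP : (0 : ℝ) < (p : ℝ) ^ ((b j).natDegree * l j) := by positivity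
      have h1 : (A : ℝ) / (p : ℝ) ^ ((b j).natDegree * l j)
          < ((c j : ℝ) + 1) / (p : ℝ) ^ ((b j).natDegree * l j) :=
        lt_of_le_of_lt hr1 (lt_of_lt_of_le hhi (hδhi j))
      have h2 : (c j : ℝ) / (p : ℝ) ^ ((b j).natDegree * l j)
          < ((A : ℝ) + 1) / (p : ℝ) ^ ((b j).natDegree * l j) :=
        lt_of_le_of_lt hlo hr2
      have h1' : (A : ℝ) < (c j : ℝ) + 1 := by
        have := (div_lt_div_iff₀ hP hP).1 h1
        nlinarith
      have h2' : (c j : ℝ) < (A : ℝ) + 1 := by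
        have := (div_lt_div_iff₀ hP hP).1 h2
        nlinarith
      have h1'' : A < c j + 1 := by exact_mod_cast (by push_cast; linarith : (A : ℝ) < ((c j + 1 : ℕ) : ℝ))
      have h2'' : c j < A + 1 := by exact_mod_cast (by push_cast; linarith : (c j : ℝ) < ((A + 1 : ℕ) : ℝ))
      omega
    have hinj : Set.InjOn (fun n => n / p ^ D) ↑S := by
      intro n hn n' hn' hq
      simp only at hq
      have hdig : ∀ j, ∀ i < l j, haltonDigit p (b j) n i = haltonDigit p (b j) n' i := by
        intro j i hi
        refine polyEvalNat_inj (rev_digits_eq (m := p ^ (b j).natDegree)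
          (fun i => haltonDigit_lt (b j) (hmonic j) (hnc j) n i)
          (fun i => haltonDigit_lt (b j) (hmonic j) (hnc j) n' i) ?_ i hi)
        rw [hAc n hn j, hAc n' hn' j]
      have hdvd : ∀ j, (b j) ^ (l j) ∣ nPoly p n - nPoly p n' := by
        intro j
        exact digits_dvd (hmonic j) (l j) _ _ (fun i hi => hdig j i hi)
      have hMdvd : (∏ j, (b j) ^ (l j)) ∣ nPoly p n - nPoly p n' :=
        Finset.prod_dvd_of_coprime
          (fun j _ j' _ hjj => ((hcop j j' hjj).pow))
          (fun j _ => hdvd j)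
      have hM : (∏ j, (b j) ^ (l j)).natDegree = D := by
        rw [Polynomial.natDegree_prod _ _ (fun j _ => ((hmonic j).pow (l j)).ne_zero), hD]
        apply Finset.sum_congr rfl
        intro j _
        rw [(hmonic j).natDegree_pow]
        ring
      have hhigh : ∀ k, D ≤ k → (nPoly p n).coeff k = (nPoly p n').coeff k := by
        intro k hk
        rw [nPoly_coeff, nPoly_coeff]
        have hdd : n / p ^ k = n' / p ^ k := by
          rw [show p ^ k = p ^ D * p ^ (k - D) by rw [← pow_add]; congr 1; omega,
            ← Nat.div_div_eq_div_mul, ← Nat.div_div_eq_div_mul, hq]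
        rw [hdd]
      have hzero : nPoly p n - nPoly p n' = 0 := by
        by_contra hne
        have hdeg : D ≤ (nPoly p n - nPoly p n').natDegree :=
          hM ▸ Polynomial.natDegree_le_of_dvd hMdvd hne
        have hlc : (nPoly p n - nPoly p n').coeff ((nPoly p n - nPoly p n').natDegree) ≠ 0 :=
          Polynomial.leadingCoeff_ne_zero.mpr hne
        apply hlc
        rw [Polynomial.coeff_sub, hhigh _ hdeg, sub_self]
      exact nPoly_inj (by rwa [sub_eq_zero] at hzero)
    have hcard : S.card ≤ N / p ^ D + 1 := by
      have h := Finset.card_le_card_of_injOn (t := Finset.range (N / p ^ D + 1))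
        (fun n => n / p ^ D)
        (fun n hn => Finset.mem_range.2 (by
          have hn' : n < N := Finset.mem_range.1 (Finset.mem_filter.1 hn).1
          exact lt_of_le_of_lt (Nat.div_le_div_right (le_of_lt hn'))
            (Nat.lt_succ_self _))) hinj
      simpa using h
    calc (S.card : ℝ) ≤ ((N / p ^ D : ℕ) : ℝ) + 1 := by exact_mod_cast hcard
      _ ≤ (N : ℝ) / (p : ℝ) ^ D + 1 := by
          have := Nat.cast_div_le (α := ℝ) (m := N) (n := p ^ D)
          push_cast at this
          linarith
      _ ≤ Real.sqrt N + 1 := by linarith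
  · -- measure part
    have hfac0 : ∀ j, (0 : ℝ) ≤ δ j - (c j : ℝ) / (p : ℝ) ^ ((b j).natDegree * l j) :=
      fun j => sub_nonneg.2 (hδlo j)
    have hfac1 : ∀ j, δ j - (c j : ℝ) / (p : ℝ) ^ ((b j).natDegree * l j)
        ≤ 1 / (p : ℝ) ^ ((b j).natDegree * l j) := by
      intro j
      have hP : (0 : ℝ) < (p : ℝ) ^ ((b j).natDegree * l j) := by positivity
      have := hδhi j
      rw [add_div] at this
      linarith
    have hprod : ∏ j, (δ j - (c j : ℝ) / (p : ℝ) ^ ((b j).natDegree * l j))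
        ≤ ∏ j, 1 / (p : ℝ) ^ ((b j).natDegree * l j) :=
      Finset.prod_le_prod (fun j _ => hfac0 j) (fun j _ => hfac1 j)
    have hprodD : ∏ j, 1 / (p : ℝ) ^ ((b j).natDegree * l j) = 1 / (p : ℝ) ^ D := by
      rw [Finset.prod_div_distrib, Finset.prod_const_one, Finset.prod_pow_eq_pow_sum]
    have hprodnn : (0 : ℝ) ≤ ∏ j, (δ j - (c j : ℝ) / (p : ℝ) ^ ((b j).natDegree * l j)) :=
      Finset.prod_nonneg (fun j _ => hfac0 j)
    have hkey : γ * ∏ j, (δ j - (c j : ℝ) / (p : ℝ) ^ ((b j).natDegree * l j))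
        ≤ 1 / (p : ℝ) ^ D := by
      calc γ * ∏ j, (δ j - (c j : ℝ) / (p : ℝ) ^ ((b j).natDegree * l j))
          ≤ 1 * (1 / (p : ℝ) ^ D) := by
            apply mul_le_mul hγ1 (hprodD ▸ hprod) hprodnn (by norm_num)
        _ = 1 / (p : ℝ) ^ D := one_mul _
    calc (N : ℝ) * (γ * ∏ j, (δ j - (c j : ℝ) / (p : ℝ) ^ ((b j).natDegree * l j)))
        ≤ (N : ℝ) * (1 / (p : ℝ) ^ D) :=
          mul_le_mul_of_nonneg_left hkey (by positivity)
      _ = (N : ℝ) / (p : ℝ) ^ D := by ring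
      _ ≤ Real.sqrt N + 1 := by linarith


end KH
end
end

section
/- Let L ∈ F_p((X^{-1})) with continued fraction partial quotients A_d satisfying K := sup_{d≥1} deg(A_d) < ∞, and let h ∈ F_p[X] be nonzero, B ∈ F_p[X] nonzero of degree e. Then for every q ∈ F_p[X], deg(h) + ν(hBL − q) ≥ −K − e, where ν is the degree valuation (ν(Σ_{i≥w} a_i X^{-i}) = −w for a_w ≠ 0). -/
open scoped Classical ENNReal
open Polynomial

noncomputable section

namespace KH

section Statement19Aux

variable {p : ℕ} [Fact p.Prime]

lemma KH.order_inv {x : LS p} (hx : x ≠ 0) : (x⁻¹).order = -x.order := by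
  have h2 : (x⁻¹ : LS p) ≠ 0 := inv_ne_zero hx
  have h3 := HahnSeries.order_mul hx h2
  rw [mul_inv_cancel₀ hx, HahnSeries.order_one] at h3
  linarith

lemma order_add_left {x y : LS p} (hx : x ≠ 0) (hy : y ≠ 0)
    (hxy : x.order < y.order) : x + y ≠ 0 ∧ (x + y).order = x.order := by
  have htop : x.orderTop < y.orderTop := by
    rw [← HahnSeries.order_eq_orderTop_of_ne_zero hx, ← HahnSeries.order_eq_orderTop_of_ne_zero hy]
    exact_mod_cast hxy
  have h1 := HahnSeries.orderTop_add_eq_left htop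
  have hne : x + y ≠ 0 := by
    intro h0
    rw [h0, HahnSeries.orderTop_zero] at h1
    exact (HahnSeries.orderTop_ne_top.mpr hx) h1.symm
  refine ⟨hne, ?_⟩
  rw [← HahnSeries.order_eq_orderTop_of_ne_zero hne, ← HahnSeries.order_eq_orderTop_of_ne_zero hx] at h1
  exact_mod_cast h1

lemma frac_coeff (M : LS p) (i : ℤ) : (frac M).coeff i = if 1 ≤ i then M.coeff i else 0 := rfl

lemma frac_zero : frac (0 : LS p) = 0 := by
  ext i
  simp [frac_coeff]

lemma one_le_order_frac {M : LS p} (h : frac M ≠ 0) : 1 ≤ (frac M).order := by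
  by_contra hc
  push_neg at hc
  have h2 := mt HahnSeries.coeff_order_eq_zero.mp h
  rw [frac_coeff, if_neg (by omega)] at h2
  exact h2 rfl

lemma order_cfA (L : LS p) (n : ℕ) : (cfA L n).order = -(degA L n) := by
  simp [degA, nu]

lemma cfA_ne_zero {L : LS p} {n : ℕ} (h1 : 1 ≤ degA L n) : cfA L n ≠ 0 := by
  intro h0
  rw [degA, nu, h0, HahnSeries.order_zero] at h1
  norm_num at h1

variable {L : LS p}

lemma frac_cfRem_ne_zero (hinf : ∀ d : ℕ, 1 ≤ d → 1 ≤ degA L d) (n : ℕ) :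
    frac (cfRem L n) ≠ 0 := by
  intro h0
  have h1 : cfRem L (n + 1) = 0 := by rw [cfRem, h0, inv_zero]
  have h2 : cfA L (n + 1) = 0 := by rw [cfA, h1, frac_zero, sub_zero]
  have h3 := hinf (n + 1) (by omega)
  rw [degA, nu, h2, HahnSeries.order_zero] at h3
  norm_num at h3

lemma cfRem_succ_ne_zero (hinf : ∀ d : ℕ, 1 ≤ d → 1 ≤ degA L d) (n : ℕ) :
    cfRem L (n + 1) ≠ 0 := by
  rw [cfRem]
  exact inv_ne_zero (frac_cfRem_ne_zero hinf n)

lemma frac_cfRem_eq_inv (n : ℕ) : frac (cfRem L n) = (cfRem L (n + 1))⁻¹ := by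
  rw [cfRem, inv_inv]

lemma order_cfRem_succ (hinf : ∀ d : ℕ, 1 ≤ d → 1 ≤ degA L d) (n : ℕ) :
    (cfRem L (n + 1)).order = -(degA L (n + 1)) := by
  have hA : cfA L (n + 1) ≠ 0 := cfA_ne_zero (hinf (n + 1) (by omega))
  have hf : frac (cfRem L (n + 1)) ≠ 0 := frac_cfRem_ne_zero hinf (n + 1)
  have hd := hinf (n + 1) (by omega)
  have hlt : (cfA L (n + 1)).order < (frac (cfRem L (n + 1))).order := by
    have h1 := one_le_order_frac hf
    rw [order_cfA]
    omega
  have hsum : cfA L (n + 1) + frac (cfRem L (n + 1)) = cfRem L (n + 1) := by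
    rw [cfA]; ring
  have h2 := (order_add_left hA hf hlt).2
  rw [hsum] at h2
  rw [h2, order_cfA]

/-- `d_h = deg Q_h` as a sum of partial quotient degrees. -/
def dsum (L : LS p) : ℕ → ℤ
  | 0 => 0
  | n + 1 => dsum L n + degA L (n + 1)

lemma dsum_lt_succ (hinf : ∀ d : ℕ, 1 ≤ d → 1 ≤ degA L d) (n : ℕ) :
    dsum L n < dsum L (n + 1) := by
  have := hinf (n + 1) (by omega)
  show dsum L n < dsum L n + degA L (n + 1)
  omega

lemma le_dsum (hinf : ∀ d : ℕ, 1 ≤ d → 1 ≤ degA L d) (n : ℕ) : (n : ℤ) ≤ dsum L n := by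
  induction n with
  | zero => simp [dsum]
  | succ k ih =>
    have := hinf (k + 1) (by omega)
    show ((k : ℤ) + 1) ≤ dsum L k + degA L (k + 1)
    omega

lemma cfQ_facts (hinf : ∀ d : ℕ, 1 ≤ d → 1 ≤ degA L d) :
    ∀ n, cfQ L n ≠ 0 ∧ (cfQ L n).order = -(dsum L n)
  | 0 => ⟨one_ne_zero, by simp [cfQ, dsum, HahnSeries.order_one]⟩
  | 1 => ⟨cfA_ne_zero (hinf 1 (by omega)), by
      rw [show cfQ L 1 = cfA L 1 from rfl, order_cfA]
      simp [dsum]⟩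
  | (n + 2) => by
    obtain ⟨h1ne, h1o⟩ := cfQ_facts hinf (n + 1)
    obtain ⟨h0ne, h0o⟩ := cfQ_facts hinf n
    have hA : cfA L (n + 2) ≠ 0 := cfA_ne_zero (hinf (n + 2) (by omega))
    have hmul : cfA L (n + 2) * cfQ L (n + 1) ≠ 0 := mul_ne_zero hA h1ne
    have hmo : (cfA L (n + 2) * cfQ L (n + 1)).order = -(dsum L (n + 2)) := by
      rw [HahnSeries.order_mul hA h1ne, order_cfA, h1o]
      show -(degA L (n + 2)) + -(dsum L (n + 1)) = -(dsum L (n + 1) + degA L (n + 2))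
      ring
    have hlt : (cfA L (n + 2) * cfQ L (n + 1)).order < (cfQ L n).order := by
      rw [hmo, h0o]
      have h5 : dsum L n < dsum L (n + 1) := dsum_lt_succ hinf n
      have h6 : dsum L (n + 1) < dsum L (n + 2) := dsum_lt_succ hinf (n + 1)
      omega
    have h3 := order_add_left hmul h0ne hlt
    rw [show cfA L (n + 2) * cfQ L (n + 1) + cfQ L n = cfQ L (n + 2) from rfl] at h3
    exact ⟨h3.1, by rw [h3.2, hmo]⟩

/-- `Q_{n-1}` with the convention `Q_{-1} = 0`. -/
def Qm (L : LS p) : ℕ → LS p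
  | 0 => 0
  | n + 1 => cfQ L n

/-- `P_{n-1}` with the convention `P_{-1} = 1`. -/
def Pm (L : LS p) : ℕ → LS p
  | 0 => 1
  | n + 1 => cfP L n

/-- `S_n = r_{n+1} Q_n + Q_{n-1}`. -/
def cfS (L : LS p) (n : ℕ) : LS p := cfRem L (n + 1) * cfQ L n + Qm L n

lemma cfQ_succ (n : ℕ) : cfQ L (n + 1) = cfA L (n + 1) * cfQ L n + Qm L n := by
  cases n with
  | zero => show cfA L 1 = cfA L 1 * 1 + 0; ring
  | succ k => rfl

lemma cfP_succ (n : ℕ) : cfP L (n + 1) = cfA L (n + 1) * cfP L n + Pm L n := by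
  cases n with
  | zero => rfl
  | succ k => rfl

lemma cfS_facts (hinf : ∀ d : ℕ, 1 ≤ d → 1 ≤ degA L d) :
    ∀ n, cfS L n ≠ 0 ∧ (cfS L n).order = -(dsum L (n + 1))
  | 0 => by
    have hr : cfRem L 1 ≠ 0 := cfRem_succ_ne_zero hinf 0
    have h1 : cfS L 0 = cfRem L 1 := by
      show cfRem L 1 * 1 + 0 = cfRem L 1; ring
    rw [h1]
    refine ⟨hr, ?_⟩
    rw [order_cfRem_succ hinf 0]
    show -(degA L 1) = -(dsum L 0 + degA L 1)
    simp [dsum]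
  | (n + 1) => by
    have hr : cfRem L (n + 2) ≠ 0 := cfRem_succ_ne_zero hinf (n + 1)
    obtain ⟨h1ne, h1o⟩ := cfQ_facts hinf (n + 1)
    obtain ⟨h0ne, h0o⟩ := cfQ_facts hinf n
    have hmul : cfRem L (n + 2) * cfQ L (n + 1) ≠ 0 := mul_ne_zero hr h1ne
    have hmo : (cfRem L (n + 2) * cfQ L (n + 1)).order = -(dsum L (n + 2)) := by
      rw [HahnSeries.order_mul hr h1ne, order_cfRem_succ hinf (n + 1), h1o]
      show -(degA L (n + 2)) + -(dsum L (n + 1)) = -(dsum L (n + 1) + degA L (n + 2))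
      ring
    have hlt : (cfRem L (n + 2) * cfQ L (n + 1)).order < (cfQ L n).order := by
      rw [hmo, h0o]
      have h5 : dsum L n < dsum L (n + 1) := dsum_lt_succ hinf n
      have h6 : dsum L (n + 1) < dsum L (n + 2) := dsum_lt_succ hinf (n + 1)
      omega
    have h3 := order_add_left hmul h0ne hlt
    rw [show cfRem L (n + 2) * cfQ L (n + 1) + cfQ L n = cfS L (n + 1) from rfl] at h3
    exact ⟨h3.1, by rw [h3.2, hmo]⟩

lemma convE (hinf : ∀ d : ℕ, 1 ≤ d → 1 ≤ degA L d) :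
    ∀ n, L * cfS L n = cfRem L (n + 1) * cfP L n + Pm L n
  | 0 => by
    have hr : cfRem L 1 ≠ 0 := cfRem_succ_ne_zero hinf 0
    have h1 : L = cfA L 0 + (cfRem L 1)⁻¹ := by
      rw [← frac_cfRem_eq_inv 0]
      show L = (cfRem L 0 - frac (cfRem L 0)) + frac (cfRem L 0)
      show L = (L - frac L) + frac L
      ring
    have h2 : (cfRem L 1)⁻¹ * cfRem L 1 = 1 := inv_mul_cancel₀ hr
    show L * (cfRem L 1 * 1 + 0) = cfRem L 1 * cfA L 0 + 1
    linear_combination (cfRem L 1) * h1 + h2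
  | (n + 1) => by
    have IH : L * (cfRem L (n + 1) * cfQ L n + Qm L n)
        = cfRem L (n + 1) * cfP L n + Pm L n := convE hinf n
    have hr2 : cfRem L (n + 2) ≠ 0 := cfRem_succ_ne_zero hinf (n + 1)
    have hrel : cfRem L (n + 1) = cfA L (n + 1) + (cfRem L (n + 2))⁻¹ := by
      rw [← frac_cfRem_eq_inv (n + 1)]
      show cfRem L (n + 1) = (cfRem L (n + 1) - frac (cfRem L (n + 1))) + frac (cfRem L (n + 1))
      ring
    have hr' : cfRem L (n + 2) * cfRem L (n + 1) = cfRem L (n + 2) * cfA L (n + 1) + 1 := by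
      rw [hrel, mul_add, mul_inv_cancel₀ hr2]
    show L * (cfRem L (n + 2) * cfQ L (n + 1) + Qm L (n + 1))
        = cfRem L (n + 2) * cfP L (n + 1) + Pm L (n + 1)
    rw [show Qm L (n + 1) = cfQ L n from rfl, show Pm L (n + 1) = cfP L n from rfl,
      cfQ_succ, cfP_succ]
    linear_combination cfRem L (n + 2) * IH - (L * cfQ L n - cfP L n) * hr'

lemma cfDet : ∀ n, ∃ ε : LS p, (ε = 1 ∨ ε = -1) ∧
    cfQ L (n + 1) * cfP L n - cfP L (n + 1) * cfQ L n = ε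
  | 0 => ⟨-1, Or.inr rfl, by
      show cfA L 1 * cfA L 0 - (cfA L 1 * cfA L 0 + 1) * 1 = -1
      ring⟩
  | (n + 1) => by
    obtain ⟨ε, hε, he⟩ := cfDet n
    refine ⟨-ε, by rcases hε with h | h <;> simp [h], ?_⟩
    show (cfA L (n + 2) * cfQ L (n + 1) + cfQ L n) * cfP L (n + 1)
        - (cfA L (n + 2) * cfP L (n + 1) + cfP L n) * cfQ L (n + 1) = -ε
    linear_combination -he

lemma Tprod (hinf : ∀ d : ℕ, 1 ≤ d → 1 ≤ degA L d) :
    ∀ n, ∃ ε : LS p, (ε = 1 ∨ ε = -1) ∧ (L * cfQ L n - cfP L n) * cfS L n = ε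
  | 0 => by
    refine ⟨1, Or.inl rfl, ?_⟩
    have hr : cfRem L 1 ≠ 0 := cfRem_succ_ne_zero hinf 0
    have h1 : L - cfA L 0 = (cfRem L 1)⁻¹ := by
      rw [← frac_cfRem_eq_inv 0]
      show L - (L - frac L) = frac L
      ring
    show (L * 1 - cfA L 0) * (cfRem L 1 * 1 + 0) = 1
    have h2 : (cfRem L 1)⁻¹ * cfRem L 1 = 1 := inv_mul_cancel₀ hr
    linear_combination (cfRem L 1) * h1 + h2
  | (n + 1) => by
    obtain ⟨ε, hε, he⟩ := @cfDet p _ L n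
    refine ⟨ε, hε, ?_⟩
    have hE : L * (cfRem L (n + 2) * cfQ L (n + 1) + cfQ L n)
        = cfRem L (n + 2) * cfP L (n + 1) + cfP L n := convE hinf (n + 1)
    show (L * cfQ L (n + 1) - cfP L (n + 1)) * (cfRem L (n + 2) * cfQ L (n + 1) + cfQ L n) = ε
    linear_combination cfQ L (n + 1) * hE + he

lemma Tfact (hinf : ∀ d : ℕ, 1 ≤ d → 1 ≤ degA L d) (n : ℕ) :
    (L * cfQ L n - cfP L n) ≠ 0 ∧ (L * cfQ L n - cfP L n).order = dsum L (n + 1) := by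
  obtain ⟨ε, hε, he⟩ := Tprod hinf n
  have hεne : ε ≠ 0 := by rcases hε with h | h <;> simp [h]
  have hεo : ε.order = 0 := by
    rcases hε with h | h
    · rw [h, HahnSeries.order_one]
    · rw [h, HahnSeries.order_neg, HahnSeries.order_one]
  have hprodne : (L * cfQ L n - cfP L n) * cfS L n ≠ 0 := he ▸ hεne
  have hTne : (L * cfQ L n - cfP L n) ≠ 0 := left_ne_zero_of_mul hprodne
  have hSne : cfS L n ≠ 0 := right_ne_zero_of_mul hprodne
  have h4 := HahnSeries.order_mul hTne hSne
  rw [he, hεo, (cfS_facts hinf n).2] at h4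
  exact ⟨hTne, by linarith⟩

/-- Series supported in nonpositive exponents (i.e. "polynomials" in `X`). -/
def IsPoly (M : LS p) : Prop := ∀ i : ℤ, 0 < i → M.coeff i = 0

lemma IsPoly.add {x y : LS p} (hx : IsPoly x) (hy : IsPoly y) : IsPoly (x + y) := by
  intro i hi
  rw [HahnSeries.coeff_add, hx i hi, hy i hi, add_zero]

lemma IsPoly.neg {x : LS p} (hx : IsPoly x) : IsPoly (-x) := by
  intro i hi
  rw [HahnSeries.coeff_neg, hx i hi, neg_zero]

lemma IsPoly.sub {x y : LS p} (hx : IsPoly x) (hy : IsPoly y) : IsPoly (x - y) := by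
  intro i hi
  rw [HahnSeries.coeff_sub, hx i hi, hy i hi, sub_zero]

lemma IsPoly.mul {x y : LS p} (hx : IsPoly x) (hy : IsPoly y) : IsPoly (x * y) := by
  intro i hi
  rw [HahnSeries.coeff_mul]
  apply Finset.sum_eq_zero
  intro ij hij
  rw [Finset.mem_addAntidiagonal] at hij
  obtain ⟨h1, h2, h3⟩ := hij
  rcases le_or_gt ij.1 0 with ha | ha
  · have hb : 0 < ij.2 := by omega
    rw [hy _ hb, mul_zero]
  · rw [hx _ ha, zero_mul]

lemma isPoly_one : IsPoly (1 : LS p) := by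
  intro i hi
  rw [HahnSeries.coeff_one, if_neg (by omega)]

lemma isPoly_zero : IsPoly (0 : LS p) := by
  intro i _
  rfl

lemma IsPoly.order_nonpos {M : LS p} (hM : IsPoly M) (h0 : M ≠ 0) : M.order ≤ 0 := by
  by_contra hc
  push_neg at hc
  exact (mt HahnSeries.coeff_order_eq_zero.mp h0) (hM _ hc)

lemma isPoly_cfA (n : ℕ) : IsPoly (cfA L n) := by
  intro i hi
  rw [cfA, HahnSeries.coeff_sub, frac_coeff, if_pos (by omega), sub_self]

lemma isPoly_cfQ : ∀ n, IsPoly (cfQ L n) ∧ IsPoly (cfP L n)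
  | 0 => ⟨isPoly_one, isPoly_cfA 0⟩
  | 1 => ⟨isPoly_cfA 1, ((isPoly_cfA 1).mul (isPoly_cfA 0)).add isPoly_one⟩
  | (n + 2) => by
    obtain ⟨hq1, hp1⟩ := isPoly_cfQ (n + 1)
    obtain ⟨hq0, hp0⟩ := isPoly_cfQ n
    exact ⟨((isPoly_cfA (n + 2)).mul hq1).add hq0, ((isPoly_cfA (n + 2)).mul hp1).add hp0⟩

lemma Xls_pow (n : ℕ) : (Xls p) ^ n = HahnSeries.single (-(n : ℤ)) 1 := by
  induction n with
  | zero => rw [pow_zero, ← HahnSeries.single_zero_one]; norm_num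
  | succ k ih =>
    rw [pow_succ, ih, Xls, HahnSeries.single_mul_single, mul_one]
    congr 1
    push_cast
    ring

lemma P2L_coeff (f : Polynomial (ZMod p)) (i : ℤ) :
    (P2L p f).coeff i = if i ≤ 0 then f.coeff (-i).toNat else 0 := by
  induction f using Polynomial.induction_on' with
  | add f g hf hg =>
    rw [map_add, HahnSeries.coeff_add, hf, hg, Polynomial.coeff_add]
    split <;> simp
  | monomial n a =>
    have h1 : (P2L p) (Polynomial.monomial n a) = HahnSeries.single (-(n : ℤ)) a := by
      show Polynomial.aeval (Xls p) (Polynomial.monomial n a) = _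
      rw [Polynomial.aeval_monomial, Xls_pow]
      have halg : (algebraMap (ZMod p) (LS p)) a = HahnSeries.single (0 : ℤ) a := by
        rw [HahnSeries.algebraMap_apply', PowerSeries.algebraMap_apply]
        simp only [Algebra.algebraMap_self, RingHom.id_apply]
        rw [HahnSeries.ofPowerSeries_C, HahnSeries.C_apply]
      rw [halg, HahnSeries.single_mul_single, zero_add, mul_one]
    rw [h1, HahnSeries.coeff_single, Polynomial.coeff_monomial]
    rcases le_or_gt i 0 with h | h
    · rw [if_pos h]
      rcases eq_or_ne i (-(n : ℤ)) with he | he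
      · rw [if_pos he, if_pos (by omega)]
      · rw [if_neg he, if_neg (by omega)]
    · rw [if_neg (by omega), if_neg (by omega)]

lemma P2L_ne_zero {f : Polynomial (ZMod p)} (hf : f ≠ 0) : P2L p f ≠ 0 := by
  intro h0
  have h1 := P2L_coeff f (-(f.natDegree : ℤ))
  rw [h0] at h1
  rw [if_pos (by omega)] at h1
  simp only [neg_neg, Int.toNat_natCast] at h1
  exact Polynomial.leadingCoeff_ne_zero.mpr hf h1.symm

lemma isPoly_P2L (f : Polynomial (ZMod p)) : IsPoly (P2L p f) := by
  intro i hi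
  rw [P2L_coeff, if_neg (by omega)]

lemma order_P2L {f : Polynomial (ZMod p)} (hf : f ≠ 0) :
    (P2L p f).order = -(f.natDegree : ℤ) := by
  have hne : P2L p f ≠ 0 := P2L_ne_zero hf
  have hle : (P2L p f).order ≤ -(f.natDegree : ℤ) := by
    apply HahnSeries.order_le_of_coeff_ne_zero
    rw [P2L_coeff, if_pos (by omega)]
    simp only [neg_neg, Int.toNat_natCast]
    exact Polynomial.leadingCoeff_ne_zero.mpr hf
  rcases eq_or_lt_of_le hle with h | h
  · exact h
  · exfalso
    apply (mt HahnSeries.coeff_order_eq_zero.mp hne)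
    rw [P2L_coeff]
    rcases le_or_gt (P2L p f).order 0 with h2 | h2
    · rw [if_pos h2]
      apply Polynomial.coeff_eq_zero_of_natDegree_lt
      omega
    · rw [if_neg (by omega)]

end Statement19Aux

/-- If `L` has continued fraction partial quotients of degree bounded by
`K`, `h ≠ 0`, and `B ≠ 0` of degree `e`, then for every polynomial `q`,
`deg(h) + ν(hBL − q) ≥ −K − e`. -/
theorem statement19 (p : ℕ) [Fact p.Prime] (L : LS p)
    (hinf : ∀ d : ℕ, 1 ≤ d → 1 ≤ degA L d)
    (KL : ℕ) (hK : ∀ d : ℕ, 1 ≤ d → degA L d ≤ (KL : ℤ))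
    (h B : Polynomial (ZMod p)) (hh : h ≠ 0) (hB : B ≠ 0)
    (q : Polynomial (ZMod p)) :
    -(KL : ℤ) - (B.natDegree : ℤ) ≤
      (h.natDegree : ℤ) + nu (P2L p h * P2L p B * L - P2L p q) := by
  classical
  set G : LS p := P2L p h * P2L p B with hGdef
  set qL : LS p := P2L p q with hqLdef
  set m : ℤ := (h.natDegree : ℤ) + (B.natDegree : ℤ) with hm
  have hm0 : 0 ≤ m := by rw [hm]; positivity
  have hGne : G ≠ 0 := mul_ne_zero (P2L_ne_zero hh) (P2L_ne_zero hB)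
  have hGpoly : IsPoly G := (isPoly_P2L h).mul (isPoly_P2L B)
  have hqpoly : IsPoly qL := isPoly_P2L q
  have hGo : G.order = -m := by
    rw [hGdef, HahnSeries.order_mul (P2L_ne_zero hh) (P2L_ne_zero hB), order_P2L hh,
      order_P2L hB, hm]
    ring
  have hnu : nu (G * L - qL) = -(G * L - qL).order := rfl
  suffices hcl : (G * L - qL).order ≤ (KL : ℤ) + m by omega
  -- choose the index k with dsum k ≤ m < dsum (k+1)
  have hex : ∃ j : ℕ, m < dsum L j := by
    refine ⟨m.toNat + 1, ?_⟩
    have h1 := le_dsum hinf (m.toNat + 1)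
    push_cast at h1
    omega
  obtain ⟨k, hk⟩ : ∃ k, Nat.find hex = k + 1 := by
    have h0 : Nat.find hex ≠ 0 := by
      intro h0
      have h1 := Nat.find_spec hex
      rw [h0] at h1
      have h2 : dsum L 0 = 0 := rfl
      omega
    exact ⟨Nat.find hex - 1, by omega⟩
  have hdk1 : m < dsum L (k + 1) := by
    have h1 := Nat.find_spec hex
    rwa [hk] at h1
  have hdk : dsum L k ≤ m := by
    by_contra hc
    push_neg at hc
    exact Nat.find_min hex (by omega) hc
  have hAb : degA L (k + 1) ≤ (KL : ℤ) := hK (k + 1) (by omega)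
  have hds : dsum L (k + 1) = dsum L k + degA L (k + 1) := rfl
  -- facts about convergents
  obtain ⟨hT, hTo⟩ := Tfact hinf k
  obtain ⟨hT', hTo'⟩ := Tfact hinf (k + 1)
  obtain ⟨ε, hε, hdet⟩ := @cfDet p _ L k
  obtain ⟨hu_ne, huo⟩ := cfQ_facts hinf k
  obtain ⟨hu'_ne, hu'o⟩ := cfQ_facts hinf (k + 1)
  have hupoly : IsPoly (cfQ L k) := (isPoly_cfQ k).1
  have hvpoly : IsPoly (cfP L k) := (isPoly_cfQ k).2
  have hu'poly : IsPoly (cfQ L (k + 1)) := (isPoly_cfQ (k + 1)).1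
  have hv'poly : IsPoly (cfP L (k + 1)) := (isPoly_cfQ (k + 1)).2
  set u : LS p := cfQ L k with hudef
  set u' : LS p := cfQ L (k + 1) with hu'def
  set v : LS p := cfP L k with hvdef
  set v' : LS p := cfP L (k + 1) with hv'def
  have hε2 : ε * ε = 1 := by rcases hε with hh1 | hh1 <;> rw [hh1] <;> ring
  have hεpoly : IsPoly ε := by
    rcases hε with hh1 | hh1
    · rw [hh1]; exact isPoly_one
    · rw [hh1]; exact isPoly_one.neg
  set a : LS p := ε * (qL * u' - G * v') with hadef
  set b : LS p := ε * (G * v - qL * u) with hbdef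
  have hapoly : IsPoly a := hεpoly.mul ((hqpoly.mul hu'poly).sub (hGpoly.mul hv'poly))
  have hbpoly : IsPoly b := hεpoly.mul ((hGpoly.mul hvpoly).sub (hqpoly.mul hupoly))
  have hG2 : G = a * u + b * u' := by
    rw [hadef, hbdef]
    linear_combination (-(ε * G)) * hdet + (-G) * hε2
  have hq2 : qL = a * v + b * v' := by
    rw [hadef, hbdef]
    linear_combination (-(ε * qL)) * hdet + (-qL) * hε2
  have hkey : G * L - qL = a * (L * u - v) + b * (L * u' - v') := by
    linear_combination L * hG2 - hq2
  by_cases hb0 : b = 0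
  · -- q/g is a multiple of the convergent
    have ha0 : a ≠ 0 := by
      intro ha0
      apply hGne
      rw [hG2, ha0, hb0]
      ring
    have hGa : G = a * u := by rw [hG2, hb0]; ring
    have hao : a.order = -m + dsum L k := by
      have h1 := HahnSeries.order_mul ha0 hu_ne
      rw [← hGa, hGo, huo] at h1
      omega
    have h2 : G * L - qL = a * (L * u - v) := by rw [hkey, hb0]; ring
    rw [h2, HahnSeries.order_mul ha0 hT, hTo, hao]
    omega
  · have hbord : b.order ≤ 0 := hbpoly.order_nonpos hb0
    have ha0 : a ≠ 0 := by
      intro ha0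
      have hGb : G = b * u' := by rw [hG2, ha0]; ring
      have h1 : G.order = b.order + u'.order := by
        rw [hGb]
        exact HahnSeries.order_mul hb0 hu'_ne
      rw [hGo, hu'o] at h1
      omega
    have hau_ne : a * u ≠ 0 := mul_ne_zero ha0 hu_ne
    have hbu_ne : b * u' ≠ 0 := mul_ne_zero hb0 hu'_ne
    have haord : (a * u).order = a.order + u.order := HahnSeries.order_mul ha0 hu_ne
    have hbord' : (b * u').order = b.order + u'.order := HahnSeries.order_mul hb0 hu'_ne
    have hblt : (b * u').order < G.order := by
      rw [hbord', hu'o, hGo]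
      omega
    have heq : (a * u).order = (b * u').order := by
      by_contra hne
      rcases lt_or_gt_of_ne hne with hlt | hgt
      · have h2 := (order_add_left hau_ne hbu_ne hlt).2
        rw [← hG2] at h2
        omega
      · have h2 := (order_add_left hbu_ne hau_ne hgt).2
        rw [add_comm (b * u') (a * u), ← hG2] at h2
        omega
    have hao : a.order = b.order - dsum L (k + 1) + dsum L k := by
      rw [haord, hbord', huo, hu'o] at heq
      omega
    have haT_ne : a * (L * u - v) ≠ 0 := mul_ne_zero ha0 hT
    have hbT_ne : b * (L * u' - v') ≠ 0 := mul_ne_zero hb0 hT'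
    have hlt2 : (a * (L * u - v)).order < (b * (L * u' - v')).order := by
      rw [HahnSeries.order_mul ha0 hT, HahnSeries.order_mul hb0 hT', hTo, hTo']
      have d1 : dsum L (k + 1) < dsum L (k + 1 + 1) := dsum_lt_succ hinf (k + 1)
      omega
    have h6 := (order_add_left haT_ne hbT_ne hlt2).2
    rw [← hkey] at h6
    rw [h6, HahnSeries.order_mul ha0 hT, hTo]
    omega

end KH
end
end
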